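/- The function h₁₁(x) = (1 − 2x) tan(πx) is strictly increasing on (0, 1/2), with limits h₁₁(0⁺) = 0 and h₁₁((1/2)⁻) = 2/π. -/

import Mathlib

open Set Filter

noncomputable def h₁₁ (x : ℝ) : ℝ := (1 - 2 * x) * Real.tan (Real.pi * x)

lemma h11_hasDerivAt {x : ℝ} (hc : Real.cos (Real.pi * x) ≠ 0) :
    HasDerivAt h₁₁
      ((-2) * Real.tan (Real.pi * x) + (1 - 2*x) * (Real.pi * (1 / Real.cos (Real.pi * x) ^ 2))) x := by
  have h1 : HasDerivAt (fun y : ℝ => Real.pi * y) Real.pi x := by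
    simpa using (hasDerivAt_id x).const_mul Real.pi
  have h2 : HasDerivAt (fun y => Real.tan (Real.pi * y)) (1 / Real.cos (Real.pi * x) ^ 2 * Real.pi) x :=
    (Real.hasDerivAt_tan hc).comp x h1
  have h3 : HasDerivAt (fun y : ℝ => 1 - 2*y) (-2) x := by
    simpa using ((hasDerivAt_id x).const_mul 2).const_sub 1
  have : HasDerivAt h₁₁ _ x := h3.mul h2
  convert this using 1
  ring

lemma cos_pos_of_mem {x : ℝ} (hx : x ∈ Ioo (0:ℝ) (1/2)) : 0 < Real.cos (Real.pi * x) := by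
  apply Real.cos_pos_of_mem_Ioo
  constructor
  · nlinarith [Real.pi_pos, hx.1, hx.2]
  · nlinarith [Real.pi_pos, hx.1, hx.2]

lemma div_sin_tendsto : Tendsto (fun y : ℝ => y / Real.sin y) (nhdsWithin 0 {0}ᶜ) (nhds 1) := by
  have h := (Real.hasDerivAt_sin 0)
  rw [hasDerivAt_iff_tendsto_slope] at h
  simp only [slope_fun_def, Real.sin_zero, sub_zero, Real.cos_zero, vsub_eq_sub,
    smul_eq_mul] at h
  have h2 := h.inv₀ one_ne_zero
  simp only [mul_inv_rev, inv_inv, inv_one] at h2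
  refine h2.congr (fun y => ?_)
  rw [div_eq_mul_inv, mul_comm]

theorem h11_props :
    StrictMonoOn h₁₁ (Ioo 0 (1 / 2)) ∧
    Tendsto h₁₁ (nhdsWithin 0 (Ioi 0)) (nhds 0) ∧
    Tendsto h₁₁ (nhdsWithin (1 / 2) (Iio (1 / 2))) (nhds (2 / Real.pi)) := by
  have hπ := Real.pi_pos
  refine ⟨?_, ?_, ?_⟩
  · -- strict mono
    have hconv : Convex ℝ (Ioo (0:ℝ) (1/2)) := convex_Ioo _ _
    apply strictMonoOn_of_deriv_pos hconv
    · intro x hx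
      exact ((h11_hasDerivAt (ne_of_gt (cos_pos_of_mem hx))).continuousAt).continuousWithinAt
    · intro x hx
      rw [interior_Ioo] at hx
      have hc := cos_pos_of_mem hx
      have hD := (h11_hasDerivAt (ne_of_gt hc)).deriv
      rw [hD]
      have hs : 0 < Real.sin (Real.pi * x) := by
        apply Real.sin_pos_of_pos_of_lt_pi
        · exact mul_pos hπ hx.1
        · nlinarith [hx.2]
      have hkey : Real.sin (Real.pi * (1 - 2*x)) < Real.pi * (1 - 2*x) :=
        Real.sin_lt (by nlinarith [hx.2])
      have hsin2 : Real.sin (Real.pi * (1 - 2*x)) = 2 * Real.sin (Real.pi*x) * Real.cos (Real.pi*x) := by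
        rw [show Real.pi * (1 - 2*x) = Real.pi - 2*(Real.pi*x) by ring, Real.sin_pi_sub,
          Real.sin_two_mul]
      rw [Real.tan_eq_sin_div_cos]
      have hc2 : (0:ℝ) < Real.cos (Real.pi*x) ^ 2 := by positivity
      rw [show (-2) * (Real.sin (Real.pi*x) / Real.cos (Real.pi*x)) +
            (1 - 2*x) * (Real.pi * (1 / Real.cos (Real.pi*x) ^ 2))
          = (Real.pi * (1 - 2*x) - 2 * Real.sin (Real.pi*x) * Real.cos (Real.pi*x)) /
              Real.cos (Real.pi*x) ^ 2 by field_simp; ring]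
      apply div_pos _ hc2
      linarith [hsin2 ▸ hkey]
  · -- limit at 0
    have hc : Real.cos (Real.pi * 0) ≠ 0 := by simp
    have hcont : ContinuousAt h₁₁ 0 := (h11_hasDerivAt hc).continuousAt
    have h := hcont.tendsto.mono_left (nhdsWithin_le_nhds (s := Ioi (0:ℝ)))
    simpa [h₁₁] using h
  · -- limit at 1/2
    set t : ℝ → ℝ := fun x => Real.pi * (1/2 - x) with ht
    have htend : Tendsto t (nhdsWithin (1/2) (Iio (1/2))) (nhdsWithin 0 {0}ᶜ) := by
      apply Tendsto.mono_right _ (nhdsWithin_mono 0 (fun y (hy : y ∈ Ioi 0) => ne_of_gt hy))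
      rw [tendsto_nhdsWithin_iff]
      constructor
      · have : ContinuousAt t (1/2) := by fun_prop
        have h0 : t (1/2) = 0 := by simp [ht]
        exact (h0 ▸ this.tendsto).mono_left nhdsWithin_le_nhds
      · filter_upwards [eventually_mem_nhdsWithin] with x hx
        simp only [mem_Iio] at hx
        have : 0 < 1/2 - x := by linarith
        exact mem_Ioi.mpr (by positivity)
    have h1 : Tendsto (fun x => t x / Real.sin (t x)) (nhdsWithin (1/2) (Iio (1/2))) (nhds 1) :=
      div_sin_tendsto.comp htend
    have h2 : Tendsto (fun x => Real.sin (Real.pi * x)) (nhdsWithin (1/2) (Iio (1/2))) (nhds 1) := by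
      have hcont : ContinuousAt (fun x => Real.sin (Real.pi * x)) (1/2) := by fun_prop
      have hval : Real.sin (Real.pi * (1/2)) = 1 := by
        rw [show Real.pi * (1/2) = Real.pi/2 by ring, Real.sin_pi_div_two]
      exact (hval ▸ hcont.tendsto).mono_left nhdsWithin_le_nhds
    have h3 : Tendsto (fun x => 2/Real.pi * (t x / Real.sin (t x) * Real.sin (Real.pi * x)))
        (nhdsWithin (1/2) (Iio (1/2))) (nhds (2/Real.pi)) := by
      have := (h1.mul h2).const_mul (2/Real.pi)
      simpa using this
    refine h3.congr' ?_
    filter_upwards [Ioo_mem_nhdsLT_of_mem (by norm_num : (1/2:ℝ) ∈ Ioc (0:ℝ) (1/2))] with x hx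
    have hc := cos_pos_of_mem hx
    have hsin_t : Real.sin (t x) = Real.cos (Real.pi * x) := by
      rw [show t x = Real.pi/2 - Real.pi * x by simp only [ht]; ring, Real.sin_pi_div_two_sub]
    simp only [h₁₁, Real.tan_eq_sin_div_cos, hsin_t]
    simp only [ht]
    field_simp
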